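/- As real s → 1 from the right, (s - 1) · ∏_{p prime, p ≡ 1 (mod 4)} (1 - p^{-s})^{-2} converges to (1/π) · ∏_{p prime, p ≡ 1 (mod 4)} (1 - p^{-2})^{-1}. -/

import Mathlib

open Filter Topology Set

namespace EulerMod4

noncomputable def ee (s : ℝ) (n : ℕ) : ℝ := (n : ℝ) ^ (-s)
noncomputable def aa (s : ℝ) (n : ℕ) : ℝ := -Real.log (1 - ee s n)
noncomputable def ll (s : ℝ) (n : ℕ) : ℝ := Real.log (1 + ee s n)

def P1 : Set ℕ := {n | n.Prime ∧ n % 4 = 1}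
def P3 : Set ℕ := {n | n.Prime ∧ n % 4 = 3}
def PP : Set ℕ := {n | n.Prime}

lemma P1_sub : P1 ⊆ PP := fun _ h => h.1
lemma P3_sub : P3 ⊆ PP := fun _ h => h.1

noncomputable def SA (s : ℝ) : ℝ := ∑' n, PP.indicator (aa s) n
noncomputable def SA1 (s : ℝ) : ℝ := ∑' n, P1.indicator (aa s) n
noncomputable def SA3 (s : ℝ) : ℝ := ∑' n, P3.indicator (aa s) n
noncomputable def SL3 (s : ℝ) : ℝ := ∑' n, P3.indicator (ll s) n

lemma ee_nonneg (s : ℝ) (n : ℕ) : 0 ≤ ee s n := Real.rpow_nonneg (Nat.cast_nonneg n) _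

lemma ee_le_half {s : ℝ} {n : ℕ} (hs : 1 ≤ s) (hn : 2 ≤ n) : ee s n ≤ 1 / 2 := by
  have h2 : (2 : ℝ) ≤ (n : ℝ) := by exact_mod_cast hn
  have h1 : (1 : ℝ) ≤ (n : ℝ) := by linarith
  calc ee s n = (n : ℝ) ^ (-s) := rfl
    _ ≤ (n : ℝ) ^ (-1 : ℝ) := Real.rpow_le_rpow_of_exponent_le h1 (by linarith)
    _ = ((n : ℝ))⁻¹ := Real.rpow_neg_one _
    _ ≤ 1 / 2 := by
        rw [one_div]
        gcongr

lemma one_sub_ee_pos {s : ℝ} {n : ℕ} (hs : 1 ≤ s) (hn : 2 ≤ n) : 0 < 1 - ee s n := by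
  have := ee_le_half hs hn; linarith

lemma neg_log_nonneg {x : ℝ} (h0 : 0 ≤ x) (h1 : x < 1) : 0 ≤ -Real.log (1 - x) := by
  rw [neg_nonneg]
  exact Real.log_nonpos (by linarith) (by linarith)

lemma neg_log_le {x : ℝ} (h0 : 0 ≤ x) (h1 : x ≤ 1 / 2) : -Real.log (1 - x) ≤ 2 * x := by
  have hx : 0 < 1 - x := by linarith
  have hinv : (1 - x)⁻¹ ≤ 2 := by
    rw [show (2 : ℝ) = (2⁻¹ : ℝ)⁻¹ by norm_num]
    gcongr
    linarith
  have h3 : Real.log (1 - x)⁻¹ ≤ (1 - x)⁻¹ - 1 :=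
    Real.log_le_sub_one_of_pos (inv_pos.2 hx)
  have h4 : (1 - x)⁻¹ - 1 = x * (1 - x)⁻¹ := by
    field_simp
    ring
  have h5 : x * (1 - x)⁻¹ ≤ x * 2 := by
    exact mul_le_mul_of_nonneg_left hinv h0
  rw [← Real.log_inv]
  linarith

lemma aa_nonneg {s : ℝ} {n : ℕ} (hs : 1 ≤ s) (hn : 2 ≤ n) : 0 ≤ aa s n :=
  neg_log_nonneg (ee_nonneg s n) (by have := ee_le_half hs hn; linarith)

lemma aa_le {s : ℝ} {n : ℕ} (hs : 1 ≤ s) (hn : 2 ≤ n) : aa s n ≤ 2 * ee s n :=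
  neg_log_le (ee_nonneg s n) (ee_le_half hs hn)

lemma ll_nonneg (s : ℝ) (n : ℕ) : 0 ≤ ll s n :=
  Real.log_nonneg (by have := ee_nonneg s n; linarith)

lemma ll_le (s : ℝ) (n : ℕ) : ll s n ≤ ee s n := by
  have h := Real.log_le_sub_one_of_pos (show (0:ℝ) < 1 + ee s n by have := ee_nonneg s n; linarith)
  simpa [ll] using h

lemma summable_ee {s : ℝ} (hs : 1 < s) : Summable (ee s) := by
  have h := Real.summable_nat_rpow_inv.mpr hs
  refine h.congr fun n => ?_
  rw [ee, Real.rpow_neg (Nat.cast_nonneg n)]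

lemma summable_ind_aa {P : Set ℕ} (hP : P ⊆ PP) {s : ℝ} (hs : 1 < s) :
    Summable (P.indicator (aa s)) := by
  refine Summable.of_nonneg_of_le (fun n => ?_) (fun n => ?_) ((summable_ee hs).mul_left 2)
  · by_cases h : n ∈ P
    · rw [Set.indicator_of_mem h]
      exact aa_nonneg hs.le (hP h).two_le
    · rw [Set.indicator_of_notMem h]
  · by_cases h : n ∈ P
    · rw [Set.indicator_of_mem h]
      exact aa_le hs.le (hP h).two_le
    · rw [Set.indicator_of_notMem h]
      have := ee_nonneg s n; linarith

lemma summable_ind_ll {P : Set ℕ} (hP : P ⊆ PP) {s : ℝ} (hs : 1 < s) :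
    Summable (P.indicator (ll s)) := by
  refine Summable.of_nonneg_of_le (fun n => ?_) (fun n => ?_) (summable_ee hs)
  · by_cases h : n ∈ P
    · rw [Set.indicator_of_mem h]; exact ll_nonneg s n
    · rw [Set.indicator_of_notMem h]
  · by_cases h : n ∈ P
    · rw [Set.indicator_of_mem h]; exact ll_le s n
    · rw [Set.indicator_of_notMem h]; exact ee_nonneg s n

/-- HasSum over a subtype from summability of the indicator. -/
lemma hasSum_ind {P : Set ℕ} {f : ℕ → ℝ} (h : Summable (P.indicator f)) :
    HasSum (fun p : ↥P => f ↑p) (∑' n, P.indicator f n) := by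
  have h2 : Summable (f ∘ (Subtype.val : ↥P → ℕ)) := summable_subtype_iff_indicator.mpr h
  have h3 := h2.hasSum
  rwa [show ∑' (p : ↥P), (f ∘ Subtype.val) p = ∑' n, P.indicator f n from tsum_subtype P f] at h3

lemma prime_mod4 {n : ℕ} (hp : n.Prime) : n % 4 = 1 ∨ n % 4 = 3 ∨ n = 2 := by
  rcases Nat.even_or_odd n with he | ho
  · exact Or.inr (Or.inr (hp.even_iff.mp he))
  · rw [Nat.odd_iff] at ho
    omega

lemma exp_aa {s : ℝ} {n : ℕ} (hs : 1 ≤ s) (hn : 2 ≤ n) :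
    Real.exp (aa s n) = (1 - ee s n)⁻¹ := by
  rw [aa, Real.exp_neg, Real.exp_log (one_sub_ee_pos hs hn)]

lemma tprod_P1_sq {s : ℝ} (hs : 1 < s) :
    ∏' p : {p : ℕ // p.Prime ∧ p % 4 = 1}, ((1 - (p : ℝ) ^ (-s))⁻¹) ^ 2
      = Real.exp (2 * SA1 s) := by
  have h0 := (hasSum_ind (summable_ind_aa P1_sub hs)).mul_left 2
  have h1 := h0.rexp
  have h2 : (Real.exp ∘ fun p : ↥P1 => 2 * aa s ↑p)
      = fun p : ↥P1 => ((1 - ((p : ℕ) : ℝ) ^ (-s))⁻¹) ^ 2 := by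
    funext p
    have hp2 : 2 ≤ (p : ℕ) := (p.2.1).two_le
    simp only [Function.comp_apply]
    rw [two_mul, Real.exp_add, ← sq, exp_aa hs.le hp2]
    rfl
  rw [h2] at h1
  exact h1.tprod_eq

lemma exp_SA_eq {s : ℝ} (hs : 1 < s) : Real.exp (SA s) = ∑' n : ℕ, 1 / (n : ℝ) ^ s := by
  have hs0 : -s ≠ 0 := neg_ne_zero.mpr (by linarith)
  let F : ℕ →*₀ ℝ :=
  { toFun := fun n => (n : ℝ) ^ (-s)
    map_zero' := by simp [Real.zero_rpow hs0]
    map_one' := by simp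
    map_mul' := fun m n => by
      push_cast
      exact Real.mul_rpow (Nat.cast_nonneg m) (Nat.cast_nonneg n) }
  have hnorm : Summable fun n => ‖F n‖ := by
    refine (summable_ee hs).congr fun n => ?_
    show ee s n = ‖(n:ℝ) ^ (-s)‖
    rw [Real.norm_eq_abs, abs_of_nonneg (Real.rpow_nonneg (Nat.cast_nonneg n) _)]
    rfl
  have hEP := EulerProduct.eulerProduct_completely_multiplicative_tprod hnorm
  have h1 := (hasSum_ind (summable_ind_aa (subset_refl PP) hs)).rexp
  have h2 : (Real.exp ∘ fun p : ↥PP => aa s ↑p) = fun p : ↥PP => (1 - F ↑p)⁻¹ := by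
    funext p
    simp only [Function.comp_apply]
    rw [exp_aa hs.le p.2.two_le]
    rfl
  rw [h2] at h1
  have h5 : HasProd (fun p : Nat.Primes => (1 - F ↑p)⁻¹) (Real.exp (SA s)) := h1
  calc Real.exp (SA s) = ∏' p : Nat.Primes, (1 - F ↑p)⁻¹ := h5.tprod_eq.symm
    _ = ∑' n : ℕ, F n := hEP
    _ = ∑' n : ℕ, 1 / (n : ℝ) ^ s := by
        refine tsum_congr fun n => ?_
        show (n : ℝ) ^ (-s) = 1 / (n : ℝ) ^ s
        rw [Real.rpow_neg (Nat.cast_nonneg n), one_div]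

lemma partition {s : ℝ} (hs : 1 < s) : SA s = SA1 s + SA3 s + aa s 2 := by
  have h1 := (summable_ind_aa P1_sub hs).hasSum
  have h3 := (summable_ind_aa P3_sub hs).hasSum
  have h2 : HasSum (fun n : ℕ => if n = 2 then aa s 2 else 0) (aa s 2) := hasSum_ite_eq 2 _
  have h := (h1.add h3).add h2
  have heq : (fun n => (P1.indicator (aa s) n + P3.indicator (aa s) n)
      + (if n = 2 then aa s 2 else 0)) = PP.indicator (aa s) := by
    funext n
    by_cases hp : n.Prime
    · rcases prime_mod4 hp with h4 | h4 | h4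
      · have hn2 : n ≠ 2 := by omega
        rw [Set.indicator_of_mem (show n ∈ P1 from ⟨hp, h4⟩),
            Set.indicator_of_notMem (show n ∉ P3 from fun hc => by have := hc.2; omega),
            if_neg hn2, Set.indicator_of_mem (show n ∈ PP from hp)]
        ring
      · have hn2 : n ≠ 2 := by omega
        rw [Set.indicator_of_notMem (show n ∉ P1 from fun hc => by have := hc.2; omega),
            Set.indicator_of_mem (show n ∈ P3 from ⟨hp, h4⟩),
            if_neg hn2, Set.indicator_of_mem (show n ∈ PP from hp)]
        ring
      · subst h4
        rw [Set.indicator_of_notMem (show 2 ∉ P1 from fun hc => by have := hc.2; omega),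
            Set.indicator_of_notMem (show 2 ∉ P3 from fun hc => by have := hc.2; omega),
            if_pos rfl, Set.indicator_of_mem (show 2 ∈ PP from hp)]
        ring
    · have hn2 : n ≠ 2 := fun hc => hp (hc ▸ Nat.prime_two)
      rw [Set.indicator_of_notMem (show n ∉ P1 from fun hc => hp hc.1),
          Set.indicator_of_notMem (show n ∉ P3 from fun hc => hp hc.1),
          if_neg hn2, Set.indicator_of_notMem (show n ∉ PP from hp)]
      ring
  rw [heq] at h
  exact h.tsum_eq

lemma C3_eq {s : ℝ} (hs : 1 < s) : SA3 (2*s) = SA3 s - SL3 s := by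
  have h1 := (summable_ind_aa P3_sub hs).hasSum
  have h2 := (summable_ind_ll P3_sub hs).hasSum
  have h := h1.sub h2
  have heq : (fun n => P3.indicator (aa s) n - P3.indicator (ll s) n)
      = P3.indicator (aa (2*s)) := by
    funext n
    by_cases hn : n ∈ P3
    · rw [Set.indicator_of_mem hn, Set.indicator_of_mem hn, Set.indicator_of_mem hn]
      have hp2 : 2 ≤ n := (P3_sub hn).two_le
      have hpos : (0:ℝ) < (n:ℝ) := by exact_mod_cast (by omega : 0 < n)
      have he2 : ee (2*s) n = ee s n * ee s n := by
        rw [ee, ee, show -(2*s) = -s + -s by ring, Real.rpow_add hpos]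
      have h1e := one_sub_ee_pos hs.le hp2
      have h1e' : (0:ℝ) < 1 + ee s n := by have := ee_nonneg s n; linarith
      rw [aa, aa, ll, he2,
        show (1 : ℝ) - ee s n * ee s n = (1 - ee s n) * (1 + ee s n) by ring,
        Real.log_mul (ne_of_gt h1e) (ne_of_gt h1e')]
      ring
    · rw [Set.indicator_of_notMem hn, Set.indicator_of_notMem hn,
        Set.indicator_of_notMem hn]
      ring
  rw [heq] at h
  exact h.tsum_eq

noncomputable def FF (s : ℝ) (k : ℕ) : ℝ := ((2*k+1 : ℕ) : ℝ) ^ (-s)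

noncomputable def Lalt (s : ℝ) : ℝ := ∑' k : ℕ, (-1 : ℝ)^k * FF s k

lemma FF_cast_pos (k : ℕ) : (0:ℝ) < ((2*k+1 : ℕ) : ℝ) := by
  exact_mod_cast Nat.succ_pos (2*k)

lemma FF_cast_one_le (k : ℕ) : (1:ℝ) ≤ ((2*k+1 : ℕ) : ℝ) := by
  exact_mod_cast Nat.succ_le_succ (Nat.zero_le (2*k))

lemma FF_antitone {s : ℝ} (hs : 0 < s) : Antitone (FF s) := by
  intro k l hkl
  have hb : ((2*k+1:ℕ):ℝ) ≤ ((2*l+1:ℕ):ℝ) := by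
    exact_mod_cast (by omega : 2*k+1 ≤ 2*l+1)
  have h1 : ((2*k+1:ℕ):ℝ)^s ≤ ((2*l+1:ℕ):ℝ)^s :=
    Real.rpow_le_rpow (FF_cast_pos k).le hb hs.le
  have h2 : (0:ℝ) < ((2*k+1:ℕ):ℝ)^s := Real.rpow_pos_of_pos (FF_cast_pos k) s
  rw [FF, FF, Real.rpow_neg (FF_cast_pos l).le, Real.rpow_neg (FF_cast_pos k).le]
  exact inv_anti₀ h2 h1

lemma FF_le {s : ℝ} (hs : 1 ≤ s) (k : ℕ) : FF s k ≤ ((2*k+1:ℕ):ℝ)⁻¹ := by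
  rw [FF]
  calc ((2*k+1:ℕ):ℝ)^(-s) ≤ ((2*k+1:ℕ):ℝ)^(-1:ℝ) :=
        Real.rpow_le_rpow_of_exponent_le (FF_cast_one_le k) (by linarith)
    _ = _ := Real.rpow_neg_one _

lemma cont_rpow_neg {c : ℝ} (hc : 0 < c) : Continuous fun s : ℝ => c ^ (-s) := by
  have h : (fun s : ℝ => c ^ (-s)) = fun s => Real.exp (Real.log c * (-s)) :=
    funext fun s => Real.rpow_def_of_pos hc (-s)
  rw [h]
  exact Real.continuous_exp.comp (continuous_const.mul continuous_neg)

lemma summable_altFF {s : ℝ} (hs : 1 < s) : Summable (fun k => (-1:ℝ)^k * FF s k) := by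
  have hinj : Function.Injective (fun k : ℕ => 2*k+1) := fun a b h => by
    have h2 : 2*a+1 = 2*b+1 := h
    omega
  have h := (summable_ee hs).comp_injective hinj
  refine Summable.of_abs (h.congr fun k => ?_)
  show ee s (2*k+1) = |(-1:ℝ)^k * FF s k|
  rw [show FF s k = ee s (2*k+1) from rfl, abs_mul, abs_pow, abs_neg, abs_one, one_pow,
    one_mul, abs_of_nonneg (ee_nonneg s _)]

lemma tendsto_partial_Lalt {s : ℝ} (hs : 1 < s) :
    Tendsto (fun m => ∑ i ∈ Finset.range m, (-1:ℝ)^i * FF s i) atTop (𝓝 (Lalt s)) :=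
  (summable_altFF hs).hasSum.tendsto_sum_nat

lemma leibniz' :
    Tendsto (fun m => ∑ i ∈ Finset.range m, (-1:ℝ)^i * FF 1 i) atTop (𝓝 (Real.pi/4)) := by
  refine Real.tendsto_sum_pi_div_four.congr fun m => ?_
  refine Finset.sum_congr rfl fun i _ => ?_
  rw [FF, Real.rpow_neg_one]
  push_cast
  ring

lemma alt_remainder {f : ℕ → ℝ} {l : ℝ} (hf : Antitone f)
    (hl : Tendsto (fun n => ∑ i ∈ Finset.range n, (-1:ℝ)^i * f i) atTop (𝓝 l)) (k : ℕ) :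
    |l - ∑ i ∈ Finset.range (2*k), (-1:ℝ)^i * f i| ≤ f (2*k) := by
  have h1 := hf.alternating_series_le_tendsto hl k
  have h2 := hf.tendsto_le_alternating_series hl k
  rw [Finset.sum_range_succ] at h2
  have h3 : ((-1:ℝ))^(2*k) = 1 := by rw [pow_mul]; norm_num
  rw [h3, one_mul] at h2
  rw [abs_le]
  constructor <;> linarith

lemma tendsto_Lalt : Tendsto Lalt (𝓝[>] (1:ℝ)) (𝓝 (Real.pi/4)) := by
  rw [Metric.tendsto_nhdsWithin_nhds]
  intro ε hε
  obtain ⟨k, hk⟩ := exists_nat_gt (3/ε)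
  have hcast : (3:ℝ)/ε < ((2*(2*k)+1:ℕ):ℝ) := by
    push_cast
    have : (0:ℝ) ≤ (k:ℝ) := Nat.cast_nonneg k
    linarith
  have hrem : ((2*(2*k)+1:ℕ):ℝ)⁻¹ < ε/3 := by
    have h1 : (ε/3)⁻¹ < ((2*(2*k)+1:ℕ):ℝ) := by
      rw [show (ε/3)⁻¹ = 3/ε by rw [inv_div]]
      exact hcast
    exact inv_lt_of_inv_lt₀ (by positivity) h1
  have hcont : Continuous fun s : ℝ => ∑ i ∈ Finset.range (2*k), (-1:ℝ)^i * FF s i := by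
    refine continuous_finset_sum _ fun i _ => ?_
    exact continuous_const.mul (cont_rpow_neg (FF_cast_pos i))
  have hc1 := hcont.continuousAt (x := 1)
  rw [Metric.continuousAt_iff] at hc1
  obtain ⟨δ, hδ0, hδ⟩ := hc1 (ε/3) (by positivity)
  refine ⟨δ, hδ0, fun s hsmem hsd => ?_⟩
  have hs1 : (1:ℝ) < s := hsmem
  have hA := alt_remainder (FF_antitone (by linarith)) (tendsto_partial_Lalt hs1) k
  have hB := alt_remainder (FF_antitone one_pos) leibniz' k
  have hC := hδ hsd
  have hF1 : FF s (2*k) ≤ ((2*(2*k)+1:ℕ):ℝ)⁻¹ := FF_le hs1.le _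
  have hF2 : FF 1 (2*k) ≤ ((2*(2*k)+1:ℕ):ℝ)⁻¹ := FF_le le_rfl _
  rw [Real.dist_eq] at hC ⊢
  have htri1 := abs_sub_le (Lalt s) (∑ i ∈ Finset.range (2*k), (-1:ℝ)^i * FF s i) (Real.pi/4)
  have htri2 := abs_sub_le (∑ i ∈ Finset.range (2*k), (-1:ℝ)^i * FF s i)
    (∑ i ∈ Finset.range (2*k), (-1:ℝ)^i * FF 1 i) (Real.pi/4)
  have hB' : |∑ i ∈ Finset.range (2*k), (-1:ℝ)^i * FF 1 i - Real.pi/4| ≤ FF 1 (2*k) := by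
    rw [abs_sub_comm]; exact hB
  linarith

lemma exp_SB_eq {s : ℝ} (hs : 1 < s) : Real.exp (SA1 s - SL3 s) = Lalt s := by
  have hs0 : -s ≠ 0 := neg_ne_zero.mpr (by linarith)
  let G : ℕ →*₀ ℝ :=
  { toFun := fun n => ((ZMod.χ₄ (n : ZMod 4) : ℤ) : ℝ) * (n : ℝ) ^ (-s)
    map_zero' := by simp [Real.zero_rpow hs0]
    map_one' := by simp
    map_mul' := fun m n => by
      have h1 : ((m*n : ℕ) : ZMod 4) = (m : ZMod 4) * (n : ZMod 4) := by push_cast; ring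
      show ((ZMod.χ₄ ((m*n : ℕ) : ZMod 4) : ℤ) : ℝ) * ((m*n : ℕ) : ℝ) ^ (-s) = _
      rw [h1, map_mul, Nat.cast_mul, Real.mul_rpow (Nat.cast_nonneg m) (Nat.cast_nonneg n)]
      push_cast
      ring }
  have hnorm : Summable fun n => ‖G n‖ := by
    refine Summable.of_nonneg_of_le (fun n => norm_nonneg _) (fun n => ?_) (summable_ee hs)
    show ‖((ZMod.χ₄ (n : ZMod 4) : ℤ) : ℝ) * (n : ℝ) ^ (-s)‖ ≤ ee s n
    have habs : |((ZMod.χ₄ (n : ZMod 4) : ℤ) : ℝ)| ≤ 1 := by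
      rw [ZMod.χ₄_nat_eq_if_mod_four]
      split_ifs <;> norm_num
    have h2 : |(n:ℝ)^(-s)| = ee s n := abs_of_nonneg (ee_nonneg s n)
    rw [Real.norm_eq_abs, abs_mul, h2]
    nlinarith [ee_nonneg s n, abs_nonneg (((ZMod.χ₄ (n : ZMod 4) : ℤ) : ℝ))]
  have hEP := EulerProduct.eulerProduct_completely_multiplicative_tprod hnorm
  have hA : Summable (PP.indicator (P1.indicator (aa s))) := by
    rw [Set.indicator_indicator, Set.inter_eq_self_of_subset_right P1_sub]
    exact summable_ind_aa P1_sub hs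
  have hL : Summable (PP.indicator (P3.indicator (ll s))) := by
    rw [Set.indicator_indicator, Set.inter_eq_self_of_subset_right P3_sub]
    exact summable_ind_ll P3_sub hs
  have h1 : HasSum (fun p : ↥PP => P1.indicator (aa s) ↑p) (SA1 s) := by
    have h := hasSum_ind hA
    rwa [Set.indicator_indicator, Set.inter_eq_self_of_subset_right P1_sub] at h
  have h2 : HasSum (fun p : ↥PP => P3.indicator (ll s) ↑p) (SL3 s) := by
    have h := hasSum_ind hL
    rwa [Set.indicator_indicator, Set.inter_eq_self_of_subset_right P3_sub] at h
  have h3 := (h1.sub h2).rexp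
  have h4 : (Real.exp ∘ fun p : ↥PP => P1.indicator (aa s) ↑p - P3.indicator (ll s) ↑p)
      = fun p : ↥PP => (1 - G ↑p)⁻¹ := by
    funext p
    obtain ⟨n, hp⟩ := p
    have hp' : n.Prime := hp
    simp only [Function.comp_apply]
    show Real.exp (P1.indicator (aa s) n - P3.indicator (ll s) n)
      = (1 - ((ZMod.χ₄ (n : ZMod 4) : ℤ) : ℝ) * (n : ℝ) ^ (-s))⁻¹
    by_cases e1 : n % 4 = 1
    · have hmem : n ∈ P1 := ⟨hp', e1⟩
      have hnot : n ∉ P3 := fun hc => by have := hc.2; omega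
      rw [Set.indicator_of_mem hmem, Set.indicator_of_notMem hnot, sub_zero,
          exp_aa hs.le hp'.two_le, ZMod.χ₄_nat_one_mod_four e1]
      norm_num
      rfl
    · by_cases e3 : n % 4 = 3
      · have hmem : n ∈ P3 := ⟨hp', e3⟩
        have hnot : n ∉ P1 := fun hc => by have := hc.2; omega
        have hpos : (0:ℝ) < 1 + ee s n := by have := ee_nonneg s n; linarith
        rw [Set.indicator_of_notMem hnot, Set.indicator_of_mem hmem, zero_sub,
            Real.exp_neg, ll, Real.exp_log hpos, ZMod.χ₄_nat_three_mod_four e3]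
        push_cast
        rw [show (1:ℝ) - (-1) * (n:ℝ)^(-s) = 1 + (n:ℝ)^(-s) by ring]
        rfl
      · have h2' : n % 2 = 0 := by
          rcases prime_mod4 hp' with h | h | h
          · exact absurd h e1
          · exact absurd h e3
          · omega
        have hnot1 : n ∉ P1 := fun hc => e1 hc.2
        have hnot3 : n ∉ P3 := fun hc => e3 hc.2
        have hchi : ZMod.χ₄ (n : ZMod 4) = 0 := by
          rw [ZMod.χ₄_nat_eq_if_mod_four, if_pos h2']
        rw [Set.indicator_of_notMem hnot1, Set.indicator_of_notMem hnot3, sub_zero,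
            Real.exp_zero, hchi]
        norm_num
  rw [h4] at h3
  have h5 : HasProd (fun p : Nat.Primes => (1 - G ↑p)⁻¹) (Real.exp (SA1 s - SL3 s)) := h3
  have h6 := h5.tprod_eq
  rw [hEP] at h6
  rw [← h6]
  have hinj : Function.Injective (fun k : ℕ => 2*k+1) := fun a b h => by
    have h2 : 2*a+1 = 2*b+1 := h
    omega
  have hsupp : Function.support (fun n : ℕ => G n) ⊆ Set.range (fun k : ℕ => 2*k+1) := by
    intro n hn
    rcases Nat.even_or_odd n with he | ho
    · exfalso
      apply hn
      have h2' : n % 2 = 0 := Nat.even_iff.mp he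
      show ((ZMod.χ₄ (n : ZMod 4) : ℤ) : ℝ) * (n:ℝ)^(-s) = 0
      rw [ZMod.χ₄_nat_eq_if_mod_four, if_pos h2']
      norm_num
    · obtain ⟨k, hk⟩ := ho
      exact ⟨k, by show 2*k+1 = n; omega⟩
  have h8 := hinj.tsum_eq (f := fun n : ℕ => G n) hsupp
  rw [← h8]
  refine tsum_congr fun k => ?_
  show ((ZMod.χ₄ ((2*k+1 : ℕ) : ZMod 4) : ℤ) : ℝ) * ((2*k+1:ℕ):ℝ)^(-s) = (-1:ℝ)^k * FF s k
  have hodd : (2*k+1) % 2 = 1 := by omega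
  have hdiv : (2*k+1) / 2 = k := by omega
  rw [ZMod.χ₄_eq_neg_one_pow hodd, hdiv, FF]
  push_cast
  ring

lemma tendsto_SA3_two : Tendsto (fun s : ℝ => SA3 (2*s)) (𝓝[>] (1:ℝ)) (𝓝 (SA3 2)) := by
  have key : Tendsto (fun s : ℝ => ∑' n, P3.indicator (aa (2*s)) n) (𝓝[>] (1:ℝ))
      (𝓝 (∑' n, P3.indicator (aa 2) n)) := by
    refine tendsto_tsum_of_dominated_convergence
      (bound := P3.indicator (fun n => 2 * ee 2 n)) ?_ ?_ ?_
    · exact ((summable_ee one_lt_two).mul_left 2).indicator P3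
    · intro n
      by_cases hn : n ∈ P3
      · simp only [Set.indicator_of_mem hn]
        have hp2 : 2 ≤ n := (P3_sub hn).two_le
        have hcpos : (0:ℝ) < (n:ℝ) := by exact_mod_cast (by omega : 0 < n)
        have hc1 : Continuous fun s : ℝ => (n:ℝ) ^ (-(2*s)) := by
          have hmul : Continuous fun s : ℝ => 2*s := continuous_const.mul continuous_id
          exact (cont_rpow_neg hcpos).comp hmul
        have hne : (1:ℝ) - (n:ℝ) ^ (-(2*(1:ℝ))) ≠ 0 := by
          have := one_sub_ee_pos (one_le_two) hp2
          rw [show -(2*(1:ℝ)) = -(2:ℝ) by ring]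
          exact ne_of_gt this
        have hcont : ContinuousAt (fun s : ℝ => aa (2*s) n) 1 := by
          have hinner : ContinuousAt (fun s : ℝ => 1 - (n:ℝ) ^ (-(2*s))) 1 :=
            (continuous_const.sub hc1).continuousAt
          exact (ContinuousAt.log hinner hne).neg
        have h := hcont.tendsto.mono_left (nhdsWithin_le_nhds (s := Set.Ioi (1:ℝ)))
        have hval : aa (2*(1:ℝ)) n = aa 2 n := by norm_num
        rw [hval] at h
        exact h
      · simp only [Set.indicator_of_notMem hn]
        exact tendsto_const_nhds
    · filter_upwards [self_mem_nhdsWithin] with s hs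
      intro n
      have hs1 : (1:ℝ) < s := hs
      by_cases hn : n ∈ P3
      · rw [Set.indicator_of_mem hn, Set.indicator_of_mem hn]
        have hp2 : 2 ≤ n := (P3_sub hn).two_le
        have h2s : (1:ℝ) < 2*s := by linarith
        rw [Real.norm_eq_abs, abs_of_nonneg (aa_nonneg h2s.le hp2)]
        calc aa (2*s) n ≤ 2 * ee (2*s) n := aa_le h2s.le hp2
          _ ≤ 2 * ee 2 n := by
              have h1 : (1:ℝ) ≤ (n:ℝ) := by exact_mod_cast (by omega : 1 ≤ n)
              have h2 : (n:ℝ)^(-(2*s)) ≤ (n:ℝ)^(-(2:ℝ)) :=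
                Real.rpow_le_rpow_of_exponent_le h1 (by linarith)
              have h3 : ee (2*s) n ≤ ee 2 n := h2
              linarith
      · rw [Set.indicator_of_notMem hn, Set.indicator_of_notMem hn]
        simp
  exact key

lemma tprod_P1_two :
    ∏' p : {p : ℕ // p.Prime ∧ p % 4 = 1}, (1 - (((p:ℕ) : ℝ)^2)⁻¹)⁻¹ = Real.exp (SA1 2) := by
  have h1 := (hasSum_ind (summable_ind_aa P1_sub one_lt_two)).rexp
  have h2 : (Real.exp ∘ fun p : ↥P1 => aa 2 ↑p)
      = fun p : ↥P1 => (1 - (((p:ℕ) : ℝ)^2)⁻¹)⁻¹ := by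
    funext p
    have hp2 : 2 ≤ (p:ℕ) := p.2.1.two_le
    simp only [Function.comp_apply]
    rw [exp_aa one_le_two hp2]
    have he : ee 2 (p:ℕ) = ((((p:ℕ)):ℝ)^2)⁻¹ := by
      rw [ee, Real.rpow_neg (Nat.cast_nonneg _), show (2:ℝ) = ((2:ℕ):ℝ) by norm_num,
        Real.rpow_natCast]
    rw [he]
  rw [h2] at h1
  exact h1.tprod_eq

lemma exp_SA_two : Real.exp (SA 2) = Real.pi^2/6 := by
  rw [exp_SA_eq one_lt_two, ← hasSum_zeta_two.tsum_eq]
  refine tsum_congr fun n => ?_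
  rw [show (2:ℝ) = ((2:ℕ):ℝ) by norm_num, Real.rpow_natCast]

lemma ee_two_two : ee 2 2 = 1/4 := by
  have h := Real.rpow_natCast ((2:ℕ):ℝ) 2
  rw [ee, Real.rpow_neg (by positivity), show (2:ℝ) = ((2:ℕ):ℝ) by norm_num, h]
  norm_num

lemma key_const : Real.exp (SA1 2) * Real.exp (SA3 2) = Real.pi^2/8 := by
  rw [← Real.exp_add]
  have hpart : SA 2 = SA1 2 + SA3 2 + aa 2 2 := partition one_lt_two
  have h2 : SA1 2 + SA3 2 = SA 2 - aa 2 2 := by linarith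
  rw [h2, Real.exp_sub, exp_SA_two, exp_aa one_le_two le_rfl, ee_two_two]
  norm_num
  ring

end EulerMod4

open EulerMod4 in
theorem euler_product_residue_mod4 :
    Filter.Tendsto
      (fun s : ℝ =>
        (s - 1) * ∏' p : {p : ℕ // p.Prime ∧ p % 4 = 1}, ((1 - (p : ℝ) ^ (-s))⁻¹) ^ 2)
      (nhdsWithin 1 (Set.Ioi 1))
      (nhds ((1 / Real.pi) *
        ∏' p : {p : ℕ // p.Prime ∧ p % 4 = 1}, (1 - ((p : ℝ) ^ 2)⁻¹)⁻¹)) := by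
  have h1 := tendsto_sub_mul_tsum_nat_rpow
  have h2 := tendsto_Lalt
  have h3 : Tendsto (fun s : ℝ => 1 - ee s 2) (𝓝[>] (1:ℝ)) (𝓝 (1 - ee 1 2)) := by
    have hc : Continuous fun s : ℝ => (((2:ℕ)):ℝ) ^ (-s) := cont_rpow_neg (by norm_num)
    exact ((continuous_const.sub hc).tendsto 1).mono_left nhdsWithin_le_nhds
  have h4 : Tendsto (fun s : ℝ => Real.exp (-(SA3 (2*s)))) (𝓝[>] (1:ℝ))
      (𝓝 (Real.exp (-(SA3 2)))) :=
    (Real.continuous_exp.tendsto _).comp tendsto_SA3_two.neg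
  have H := ((h1.mul h2).mul h3).mul h4
  have he1 : ee 1 2 = 1/2 := by
    rw [ee, Real.rpow_neg_one]; norm_num
  have hval : 1 * (Real.pi/4) * (1 - ee 1 2) * Real.exp (-(SA3 2))
      = 1 / Real.pi * ∏' p : {p : ℕ // p.Prime ∧ p % 4 = 1}, (1 - (((p:ℕ) : ℝ)^2)⁻¹)⁻¹ := by
    rw [tprod_P1_two, he1, Real.exp_neg]
    have key := key_const
    have hne : Real.exp (SA3 2) ≠ 0 := (Real.exp_pos _).ne'
    have hpi : Real.pi ≠ 0 := Real.pi_ne_zero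
    field_simp
    nlinarith [key]
  rw [hval] at H
  refine Tendsto.congr' ?_ H
  filter_upwards [self_mem_nhdsWithin] with s hs
  have hs1 : (1:ℝ) < s := hs
  show (s - 1) * (∑' n : ℕ, 1 / (n:ℝ)^s) * Lalt s * (1 - ee s 2) * Real.exp (-(SA3 (2*s)))
      = (s - 1) * ∏' p : {p : ℕ // p.Prime ∧ p % 4 = 1}, ((1 - ((p:ℕ) : ℝ) ^ (-s))⁻¹) ^ 2
  rw [tprod_P1_sq hs1, ← exp_SA_eq hs1, ← exp_SB_eq hs1]
  have hkey : 2 * SA1 s = SA s + (SA1 s - SL3 s) + (-(aa s 2)) + (-(SA3 (2*s))) := by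
    have hp := partition hs1
    have hc := C3_eq hs1
    linarith
  have hexp2 : Real.exp (-(aa s 2)) = 1 - ee s 2 := by
    rw [Real.exp_neg, exp_aa hs1.le le_rfl, inv_inv]
  rw [hkey, Real.exp_add, Real.exp_add, Real.exp_add, hexp2]
  ring
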